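/- If 𝐌 : I^p → I^p is a continuous, weakly contractive mean-type mapping, then there exists a unique 𝐌-invariant mean K : I^p → I; moreover, the sequence of iterates (𝐌ⁿ)_{n∈ℕ} converges pointwise on I^p to 𝐊 := (K,…,K). -/

import Mathlib

open Filter Set Topology

/-- `M` is a mean on the interval `I` (for `p`-tuples): its value is between the
minimum and the maximum of the arguments, for every tuple with entries in `I`. -/
def IsMean (I : Set ℝ) (p : ℕ) (M : (Fin p → ℝ) → ℝ) : Prop :=
  ∀ v : Fin p → ℝ, (∀ i, v i ∈ I) →
    sInf (Set.range v) ≤ M v ∧ M v ≤ sSup (Set.range v)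

/-- A mean-type mapping: every coordinate function is a mean on `I`, and it maps
`I^p` into `I^p`. -/
def IsMeanType (I : Set ℝ) (p : ℕ) (T : (Fin p → ℝ) → Fin p → ℝ) : Prop :=
  (∀ i, IsMean I p fun v => T v i) ∧
    ∀ v : Fin p → ℝ, (∀ i, v i ∈ I) → ∀ i, T v i ∈ I

/-- The unfolded orbit `O*_𝐌(v)`: the `(n*p + i)`-th term (`0 ≤ i < p`) is the
`i`-th coordinate of `𝐌ⁿ(v)`. -/
def orbitSeq (p : ℕ) (hp : 0 < p) (T : (Fin p → ℝ) → Fin p → ℝ)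
    (v : Fin p → ℝ) : ℕ → ℝ :=
  fun k => (T^[k / p] v) ⟨k % p, Nat.mod_lt k hp⟩

section Aux

variable {p : ℕ}

private lemma continuous_hi (hp : 0 < p) :
    Continuous fun w : Fin p → ℝ => sSup (Set.range w) := by
  haveI : Nonempty (Fin p) := Fin.pos_iff_nonempty.mp hp
  have hne : (Finset.univ : Finset (Fin p)).Nonempty := Finset.univ_nonempty
  have h : ∀ w : Fin p → ℝ, sSup (Set.range w) = Finset.univ.sup' hne w := by
    intro w
    rw [Finset.sup'_eq_csSup_image]
    simp
  simp only [h]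
  rw [continuous_iff_continuousAt]
  intro x
  exact ContinuousAt.finset_sup'_apply hne fun i _ => (continuous_apply i).continuousAt

private lemma continuous_lo (hp : 0 < p) :
    Continuous fun w : Fin p → ℝ => sInf (Set.range w) := by
  haveI : Nonempty (Fin p) := Fin.pos_iff_nonempty.mp hp
  have hne : (Finset.univ : Finset (Fin p)).Nonempty := Finset.univ_nonempty
  have h : ∀ w : Fin p → ℝ, sInf (Set.range w) = Finset.univ.inf' hne w := by
    intro w
    rw [Finset.inf'_eq_csInf_image]
    simp
  simp only [h]
  rw [continuous_iff_continuousAt]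
  intro x
  exact ContinuousAt.finset_inf'_apply hne fun i _ => (continuous_apply i).continuousAt

/-- The gap `max − min` along the orbit tends to zero. -/
private lemma gap_tendsto_zero {I : Set ℝ} (hI : I.OrdConnected) (hp0 : 0 < p)
    (T : (Fin p → ℝ) → Fin p → ℝ) (hT : IsMeanType I p T)
    (hcont : ContinuousOn T {v : Fin p → ℝ | ∀ i, v i ∈ I})
    (hwc : ∀ v : Fin p → ℝ, (∀ i, v i ∈ I) → (∃ i j, v i ≠ v j) →
      ∃ n₀ : ℕ, ∀ n ≥ n₀,
        sSup (Set.range (T^[n] v)) - sInf (Set.range (T^[n] v)) <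
          sSup (Set.range v) - sInf (Set.range v))
    (v : Fin p → ℝ) (hv : ∀ i, v i ∈ I) :
    Tendsto (fun n => sSup (Set.range (T^[n] v)) - sInf (Set.range (T^[n] v)))
      atTop (nhds 0) := by
  haveI : Nonempty (Fin p) := Fin.pos_iff_nonempty.mp hp0
  have hbdda : ∀ w : Fin p → ℝ, BddAbove (Set.range w) := fun w => (Set.finite_range w).bddAbove
  have hbddb : ∀ w : Fin p → ℝ, BddBelow (Set.range w) := fun w => (Set.finite_range w).bddBelow
  have hle_hi : ∀ (w : Fin p → ℝ) i, w i ≤ sSup (Set.range w) :=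
    fun w i => le_csSup (hbdda w) (mem_range_self i)
  have hlo_le : ∀ (w : Fin p → ℝ) i, sInf (Set.range w) ≤ w i :=
    fun w i => csInf_le (hbddb w) (mem_range_self i)
  set m : ℕ → ℝ := fun n => sInf (Set.range (T^[n] v)) with hm_def
  set M : ℕ → ℝ := fun n => sSup (Set.range (T^[n] v)) with hM_def
  -- iterates stay in I^p
  have hvI : ∀ n i, T^[n] v i ∈ I := by
    intro n
    induction n with
    | zero => simpa using hv
    | succ n ih =>
      intro i
      rw [Function.iterate_succ_apply']
      exact hT.2 _ ih i
  -- one-step monotonicity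
  have hstep_lo : ∀ w : Fin p → ℝ, (∀ i, w i ∈ I) →
      sInf (Set.range w) ≤ sInf (Set.range (T w)) := by
    intro w hw
    refine le_csInf (Set.range_nonempty _) ?_
    rintro x ⟨i, rfl⟩
    exact ((hT.1 i) w hw).1
  have hstep_hi : ∀ w : Fin p → ℝ, (∀ i, w i ∈ I) →
      sSup (Set.range (T w)) ≤ sSup (Set.range w) := by
    intro w hw
    refine csSup_le (Set.range_nonempty _) ?_
    rintro x ⟨i, rfl⟩
    exact ((hT.1 i) w hw).2
  have hm_mono : Monotone m := by
    refine monotone_nat_of_le_succ fun n => ?_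
    have := hstep_lo (T^[n] v) (hvI n)
    simpa [hm_def, Function.iterate_succ_apply'] using this
  have hM_anti : Antitone M := by
    refine antitone_nat_of_succ_le fun n => ?_
    have := hstep_hi (T^[n] v) (hvI n)
    simpa [hM_def, Function.iterate_succ_apply'] using this
  have hmM : ∀ n, m n ≤ M n := fun n =>
    le_trans (hlo_le (T^[n] v) ⟨0, hp0⟩) (hle_hi (T^[n] v) ⟨0, hp0⟩)
  -- the gap sequence
  set d : ℕ → ℝ := fun n => M n - m n with hd_def
  have hd_anti : Antitone d := fun a b hab =>
    sub_le_sub (hM_anti hab) (hm_mono hab)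
  have hd_nonneg : ∀ n, 0 ≤ d n := fun n => sub_nonneg.mpr (hmM n)
  have hd_bdd : BddBelow (Set.range d) := ⟨0, by rintro x ⟨n, rfl⟩; exact hd_nonneg n⟩
  set D : ℝ := ⨅ n, d n with hD_def
  have hd_tendsto : Tendsto d atTop (nhds D) := tendsto_atTop_ciInf hd_anti hd_bdd
  have hD_nonneg : 0 ≤ D := le_ciInf hd_nonneg
  have hD_le : ∀ n, D ≤ d n := fun n => ciInf_le hd_bdd n
  -- it suffices to show D = 0
  suffices hD0 : D = 0 by rw [hD0] at hd_tendsto; exact hd_tendsto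
  by_contra hD0
  have hD_pos : 0 < D := lt_of_le_of_ne hD_nonneg (Ne.symm hD0)
  -- compactness setup
  set C : Set (Fin p → ℝ) := Set.Icc (fun _ => m 0) (fun _ => M 0) with hC_def
  have hCcomp : IsCompact C := isCompact_Icc
  have huC : ∀ n, T^[n] v ∈ C := by
    intro n
    constructor
    · intro i
      exact le_trans (hm_mono (Nat.zero_le n)) (hlo_le (T^[n] v) i)
    · intro i
      exact le_trans (hle_hi (T^[n] v) i) (hM_anti (Nat.zero_le n))
  have hm0I : m 0 ∈ I := by
    have : m 0 ∈ Set.range v := by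
      simpa [hm_def] using (Set.range_nonempty v).csInf_mem (Set.finite_range v)
    obtain ⟨i, hi⟩ := this
    exact hi ▸ hv i
  have hM0I : M 0 ∈ I := by
    have : M 0 ∈ Set.range v := by
      simpa [hM_def] using (Set.range_nonempty v).csSup_mem (Set.finite_range v)
    obtain ⟨i, hi⟩ := this
    exact hi ▸ hv i
  have hCI : C ⊆ {w : Fin p → ℝ | ∀ i, w i ∈ I} := by
    intro x hx i
    exact hI.out hm0I hM0I ⟨hx.1 i, hx.2 i⟩
  -- T maps C into C
  have hmaps : Set.MapsTo T C C := by
    intro x hx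
    have hxI : ∀ i, x i ∈ I := hCI hx
    constructor
    · intro i
      refine le_trans ?_ ((hT.1 i) x hxI).1
      exact le_csInf (Set.range_nonempty _) (by rintro y ⟨j, rfl⟩; exact hx.1 j)
    · intro i
      refine le_trans ((hT.1 i) x hxI).2 ?_
      exact csSup_le (Set.range_nonempty _) (by rintro y ⟨j, rfl⟩; exact hx.2 j)
  have hitcont : ∀ n, ContinuousOn (T^[n]) C := by
    intro n
    induction n with
    | zero => simpa using continuousOn_id
    | succ n ih =>
      rw [Function.iterate_succ']
      exact ContinuousOn.comp (hcont.mono hCI) ih (hmaps.iterate n)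
  -- extract converging subsequence
  obtain ⟨w, hwC, φ, hφ, hwlim⟩ := hCcomp.tendsto_subseq huC
  -- the gap at w equals D
  have hdw_lim : Tendsto (fun k => d (φ k)) atTop (nhds D) :=
    hd_tendsto.comp hφ.tendsto_atTop
  have hdw_lim' : Tendsto (fun k => d (φ k)) atTop
      (nhds (sSup (Set.range w) - sInf (Set.range w))) := by
    have h1 : Tendsto (fun k => sSup (Set.range (T^[φ k] v))) atTop
        (nhds (sSup (Set.range w))) := ((continuous_hi hp0).tendsto w).comp hwlim
    have h2 : Tendsto (fun k => sInf (Set.range (T^[φ k] v))) atTop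
        (nhds (sInf (Set.range w))) := ((continuous_lo hp0).tendsto w).comp hwlim
    exact h1.sub h2
  have hdw : sSup (Set.range w) - sInf (Set.range w) = D :=
    tendsto_nhds_unique hdw_lim' hdw_lim
  -- w is nonconstant
  have hwne : ∃ i j, w i ≠ w j := by
    by_contra h
    push_neg at h
    have : sSup (Set.range w) ≤ sInf (Set.range w) := by
      obtain ⟨j, hj⟩ := (Set.range_nonempty w).csInf_mem (Set.finite_range w)
      refine csSup_le (Set.range_nonempty _) ?_
      rintro x ⟨i, rfl⟩
      rw [h i j, hj]
    have : sSup (Set.range w) - sInf (Set.range w) ≤ 0 := sub_nonpos.mpr this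
    rw [hdw] at this
    exact absurd (lt_of_lt_of_le hD_pos this) (lt_irrefl 0)
  obtain ⟨n₀, hn₀⟩ := hwc w (hCI hwC) hwne
  have hkey : sSup (Set.range (T^[n₀] w)) - sInf (Set.range (T^[n₀] w)) < D := by
    have := hn₀ n₀ le_rfl
    rwa [hdw] at this
  -- continuity of T^[n₀] at w along C
  have hTn_lim : Tendsto (fun k => T^[n₀] (T^[φ k] v)) atTop (nhds (T^[n₀] w)) := by
    have hwithin : Tendsto (fun k => T^[φ k] v) atTop (nhdsWithin w C) :=
      tendsto_nhdsWithin_of_tendsto_nhds_of_eventually_within _ hwlim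
        (Eventually.of_forall fun k => huC (φ k))
    exact (hitcont n₀ w hwC).tendsto.comp hwithin
  have hTn_eq : ∀ k, T^[n₀] (T^[φ k] v) = T^[n₀ + φ k] v := by
    intro k
    rw [Function.iterate_add_apply]
  have hgap_lim : Tendsto (fun k => d (n₀ + φ k)) atTop
      (nhds (sSup (Set.range (T^[n₀] w)) - sInf (Set.range (T^[n₀] w)))) := by
    have h1 : Tendsto (fun k => sSup (Set.range (T^[n₀ + φ k] v))) atTop
        (nhds (sSup (Set.range (T^[n₀] w)))) := by
      have := ((continuous_hi hp0).tendsto (T^[n₀] w)).comp hTn_lim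
      simpa [Function.comp_def, hTn_eq] using this
    have h2 : Tendsto (fun k => sInf (Set.range (T^[n₀ + φ k] v))) atTop
        (nhds (sInf (Set.range (T^[n₀] w)))) := by
      have := ((continuous_lo hp0).tendsto (T^[n₀] w)).comp hTn_lim
      simpa [Function.comp_def, hTn_eq] using this
    exact h1.sub h2
  have : D ≤ sSup (Set.range (T^[n₀] w)) - sInf (Set.range (T^[n₀] w)) :=
    ge_of_tendsto' hgap_lim fun k => hD_le (n₀ + φ k)
  exact absurd (lt_of_le_of_lt this hkey) (lt_irrefl D)

end Aux

/-- A continuous, weakly contractive mean-type mapping has a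
unique invariant mean `K`, and the iterates converge pointwise to `(K,…,K)`. -/
theorem exists_unique_invariant_mean_of_continuous_weakly_contractive
    {I : Set ℝ} (hne : I.Nonempty) (hI : I.OrdConnected)
    {p : ℕ} (hp : 2 ≤ p)
    (T : (Fin p → ℝ) → Fin p → ℝ) (hT : IsMeanType I p T)
    (hcont : ContinuousOn T {v : Fin p → ℝ | ∀ i, v i ∈ I})
    (hwc : ∀ v : Fin p → ℝ, (∀ i, v i ∈ I) → (∃ i j, v i ≠ v j) →
      ∃ n₀ : ℕ, ∀ n ≥ n₀,
        sSup (Set.range (T^[n] v)) - sInf (Set.range (T^[n] v)) <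
          sSup (Set.range v) - sInf (Set.range v)) :
    ∃ K : (Fin p → ℝ) → ℝ,
      (IsMean I p K ∧ ∀ v : Fin p → ℝ, (∀ i, v i ∈ I) → K (T v) = K v) ∧
      (∀ K' : (Fin p → ℝ) → ℝ, IsMean I p K' →
        (∀ v : Fin p → ℝ, (∀ i, v i ∈ I) → K' (T v) = K' v) →
        ∀ v : Fin p → ℝ, (∀ i, v i ∈ I) → K' v = K v) ∧
      ∀ v : Fin p → ℝ, (∀ i, v i ∈ I) →
        ∀ i, Filter.Tendsto (fun n => T^[n] v i) Filter.atTop (nhds (K v)) := by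
  have hp0 : 0 < p := by omega
  haveI : Nonempty (Fin p) := Fin.pos_iff_nonempty.mp hp0
  have hbdda : ∀ w : Fin p → ℝ, BddAbove (Set.range w) := fun w => (Set.finite_range w).bddAbove
  have hbddb : ∀ w : Fin p → ℝ, BddBelow (Set.range w) := fun w => (Set.finite_range w).bddBelow
  have hle_hi : ∀ (w : Fin p → ℝ) i, w i ≤ sSup (Set.range w) :=
    fun w i => le_csSup (hbdda w) (mem_range_self i)
  have hlo_le : ∀ (w : Fin p → ℝ) i, sInf (Set.range w) ≤ w i :=
    fun w i => csInf_le (hbddb w) (mem_range_self i)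
  have hvI : ∀ v : Fin p → ℝ, (∀ i, v i ∈ I) → ∀ n i, T^[n] v i ∈ I := by
    intro v hv n
    induction n with
    | zero => simpa using hv
    | succ n ih =>
      intro i
      rw [Function.iterate_succ_apply']
      exact hT.2 _ ih i
  have hstep_lo : ∀ w : Fin p → ℝ, (∀ i, w i ∈ I) →
      sInf (Set.range w) ≤ sInf (Set.range (T w)) := by
    intro w hw
    refine le_csInf (Set.range_nonempty _) ?_
    rintro x ⟨i, rfl⟩
    exact ((hT.1 i) w hw).1
  have hstep_hi : ∀ w : Fin p → ℝ, (∀ i, w i ∈ I) →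
      sSup (Set.range (T w)) ≤ sSup (Set.range w) := by
    intro w hw
    refine csSup_le (Set.range_nonempty _) ?_
    rintro x ⟨i, rfl⟩
    exact ((hT.1 i) w hw).2
  have hm_mono : ∀ v : Fin p → ℝ, (∀ i, v i ∈ I) →
      Monotone fun n => sInf (Set.range (T^[n] v)) := by
    intro v hv
    refine monotone_nat_of_le_succ fun n => ?_
    have := hstep_lo (T^[n] v) (hvI v hv n)
    simpa [Function.iterate_succ_apply'] using this
  have hM_anti : ∀ v : Fin p → ℝ, (∀ i, v i ∈ I) →
      Antitone fun n => sSup (Set.range (T^[n] v)) := by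
    intro v hv
    refine antitone_nat_of_succ_le fun n => ?_
    have := hstep_hi (T^[n] v) (hvI v hv n)
    simpa [Function.iterate_succ_apply'] using this
  have hmM : ∀ v : Fin p → ℝ, ∀ n,
      sInf (Set.range (T^[n] v)) ≤ sSup (Set.range (T^[n] v)) := fun v n =>
    le_trans (hlo_le (T^[n] v) ⟨0, hp0⟩) (hle_hi (T^[n] v) ⟨0, hp0⟩)
  -- define K
  set K : (Fin p → ℝ) → ℝ := fun v => ⨆ n, sInf (Set.range (T^[n] v)) with hK_def
  -- key convergence facts
  have hbddm : ∀ v : Fin p → ℝ, (∀ i, v i ∈ I) →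
      BddAbove (Set.range fun n => sInf (Set.range (T^[n] v))) := by
    intro v hv
    refine ⟨sSup (Set.range v), ?_⟩
    rintro x ⟨n, rfl⟩
    exact le_trans (hmM v n) (by simpa using hM_anti v hv (Nat.zero_le n))
  have hkeym : ∀ v : Fin p → ℝ, (∀ i, v i ∈ I) →
      Tendsto (fun n => sInf (Set.range (T^[n] v))) atTop (nhds (K v)) := by
    intro v hv
    exact tendsto_atTop_ciSup (hm_mono v hv) (hbddm v hv)
  have hkeyM : ∀ v : Fin p → ℝ, (∀ i, v i ∈ I) →
      Tendsto (fun n => sSup (Set.range (T^[n] v))) atTop (nhds (K v)) := by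
    intro v hv
    have hgap := gap_tendsto_zero hI hp0 T hT hcont hwc v hv
    have := hgap.add (hkeym v hv)
    simpa using this
  -- coordinatewise convergence
  have hconv : ∀ v : Fin p → ℝ, (∀ i, v i ∈ I) →
      ∀ i, Tendsto (fun n => T^[n] v i) atTop (nhds (K v)) := by
    intro v hv i
    exact tendsto_of_tendsto_of_tendsto_of_le_of_le (hkeym v hv) (hkeyM v hv)
      (fun n => hlo_le (T^[n] v) i) (fun n => hle_hi (T^[n] v) i)
  refine ⟨K, ⟨?_, ?_⟩, ?_, hconv⟩
  · -- K is a mean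
    intro v hv
    constructor
    · have : sInf (Set.range (T^[0] v)) ≤ K v :=
        le_ciSup (hbddm v hv) 0
      simpa using this
    · refine ciSup_le fun n => ?_
      exact le_trans (hmM v n) (by simpa using hM_anti v hv (Nat.zero_le n))
  · -- invariance
    intro v hv
    have hTvI : ∀ i, T v i ∈ I := hT.2 v hv
    have h1 : Tendsto (fun n => sInf (Set.range (T^[n] (T v)))) atTop (nhds (K (T v))) :=
      hkeym (T v) hTvI
    have h2 : Tendsto (fun n => sInf (Set.range (T^[n] (T v)))) atTop (nhds (K v)) := by
      have := (hkeym v hv).comp (tendsto_add_atTop_nat 1)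
      simpa [Function.comp_def, Function.iterate_succ_apply] using this
    exact tendsto_nhds_unique h1 h2
  · -- uniqueness
    intro K' hK'mean hK'inv v hv
    have hK'orbit : ∀ n, K' (T^[n] v) = K' v := by
      intro n
      induction n with
      | zero => simp
      | succ n ih =>
        rw [Function.iterate_succ_apply', hK'inv _ (hvI v hv n), ih]
    have hlb : ∀ n, sInf (Set.range (T^[n] v)) ≤ K' v := by
      intro n
      have := (hK'mean (T^[n] v) (hvI v hv n)).1
      rwa [hK'orbit n] at this
    have hub : ∀ n, K' v ≤ sSup (Set.range (T^[n] v)) := by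
      intro n
      have := (hK'mean (T^[n] v) (hvI v hv n)).2
      rwa [hK'orbit n] at this
    have h1 : K v ≤ K' v := le_of_tendsto' (hkeym v hv) hlb
    have h2 : K' v ≤ K v := ge_of_tendsto' (hkeyM v hv) hub
    exact le_antisymm h2 h1
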